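/- Let γ : I → X be locally of bounded variation. Then for Lebesgue-almost every t ∈ I, either liminf_{ε→0} Var(γ;[t∧(t+ε), t∨(t+ε)])/|ε| = 0, or lim_{ε→0} d(γ(t+ε),γ(t)) / Var(γ;[t∧(t+ε), t∨(t+ε)]) = 1 (limits over ε with t+ε ∈ I). -/

import Mathlib

open Filter Topology Set MeasureTheory Function
open scoped ENNReal NNReal

namespace VarDich

lemma leftLim_stieltjes_le {g : ℝ → ℝ} (hg : Monotone g) (u : ℝ) :
    Function.leftLim (⇑hg.stieltjesFunction) u ≤ g u := by
  refine le_of_tendsto (hg.stieltjesFunction.mono.tendsto_leftLim u) ?_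
  filter_upwards [self_mem_nhdsWithin] with y (hy : y < u)
  exact hg.rightLim_le hy

lemma le_stieltjes {g : ℝ → ℝ} (hg : Monotone g) (u : ℝ) :
    g u ≤ hg.stieltjesFunction u :=
  hg.le_rightLim le_rfl

lemma ofReal_le_measure_Icc {g : ℝ → ℝ} (hg : Monotone g) {u v : ℝ} :
    ENNReal.ofReal (g v - g u) ≤ hg.stieltjesFunction.measure (Icc u v) := by
  rw [StieltjesFunction.measure_Icc]
  exact ENNReal.ofReal_le_ofReal (by
    have h1 := le_stieltjes hg v
    have h2 := leftLim_stieltjes_le hg u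
    linarith)

lemma measure_Ioo_le_ofReal {g : ℝ → ℝ} (hg : Monotone g) {u v : ℝ} :
    hg.stieltjesFunction.measure (Ioo u v) ≤ ENNReal.ofReal (g v - g u) := by
  rw [StieltjesFunction.measure_Ioo]
  exact ENNReal.ofReal_le_ofReal (by
    have h1 := leftLim_stieltjes_le hg v
    have h2 := le_stieltjes hg u
    linarith)

lemma measure_Icc_split {μ : Measure ℝ} {u v : ℝ} (huv : u < v) :
    μ (Icc u v) = μ (Ioo u v) + μ {u} + μ {v} := by
  have h1 : Icc u v = (Ioo u v ∪ {u}) ∪ {v} := by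
    ext x
    simp only [mem_Icc, mem_union, mem_Ioo, mem_singleton_iff]
    constructor
    · rintro ⟨h1, h2⟩
      rcases eq_or_lt_of_le h2 with rfl | h2
      · tauto
      rcases eq_or_lt_of_le h1 with rfl | h1
      · tauto
      · tauto
    · rintro ((⟨h1, h2⟩ | rfl) | rfl) <;> constructor <;> linarith
  rw [h1, measure_union, measure_union]
  · simp [disjoint_singleton_right, huv.le]
  · exact measurableSet_singleton _
  · rw [Set.disjoint_right]
    rintro x rfl
    simp only [mem_union, mem_Ioo, mem_singleton_iff]
    push_neg
    exact ⟨fun _ => le_rfl, huv.ne'⟩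
  · exact measurableSet_singleton _

lemma stieltjes_finite {g : ℝ → ℝ} (hg : Monotone g) {p q : ℝ}
    (hl : ∀ t, t ≤ p → g t = g p) (hu : ∀ t, q ≤ t → g t = g q) :
    IsFiniteMeasure hg.stieltjesFunction.measure := by
  have h1 : ∀ x, x < p → hg.stieltjesFunction x = g p := by
    intro x hx
    refine rightLim_eq_of_tendsto ?_
    refine Tendsto.congr' ?_ tendsto_const_nhds
    filter_upwards [Ioo_mem_nhdsGT_of_mem ⟨le_rfl, hx⟩] with y hy
    exact (hl y hy.2.le).symm
  have h2 : ∀ x, q ≤ x → hg.stieltjesFunction x = g q := by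
    intro x hx
    refine rightLim_eq_of_tendsto ?_
    refine Tendsto.congr' ?_ tendsto_const_nhds
    filter_upwards [self_mem_nhdsWithin] with y (hy : x < y)
    exact (hu y (hx.trans hy.le)).symm
  refine hg.stieltjesFunction.isFiniteMeasure (l := g p) (u := g q) ?_ ?_
  · refine Tendsto.congr' ?_ tendsto_const_nhds
    filter_upwards [Iio_mem_atBot p] with y hy
    exact (h1 y hy).symm
  · refine Tendsto.congr' ?_ tendsto_const_nhds
    filter_upwards [Ici_mem_atTop q] with y hy
    exact (h2 y hy).symm

lemma toReal_absdiff {a b : ℝ≥0∞} (ha : a ≠ ⊤) (hb : b ≠ ⊤) :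
    ((a - b) ⊔ (b - a)).toReal = |a.toReal - b.toReal| := by
  rcases le_total a b with h | h
  · rw [tsub_eq_zero_of_le h, sup_of_le_right zero_le, ENNReal.toReal_sub_of_le h hb,
      abs_of_nonpos (by simp [sub_nonpos, ENNReal.toReal_mono hb h])]
    ring
  · rw [tsub_eq_zero_of_le h, sup_of_le_left zero_le, ENNReal.toReal_sub_of_le h ha,
      abs_of_nonneg (by simp [sub_nonneg, ENNReal.toReal_mono ha h])]

lemma segment_bound_one (P Q : ℝ → ℝ) (hP : Monotone P) (hQ : Monotone Q)
    [IsFiniteMeasure hP.stieltjesFunction.measure]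
    [IsFiniteMeasure hQ.stieltjesFunction.measure]
    (SING : Measure ℝ) [IsFiniteMeasure SING] (m : ℝ → ℝ≥0∞) (hm : Measurable m)
    (hmfin : ∫⁻ t, m t ∂(volume : Measure ℝ) ≠ ⊤)
    (hmP : ∀ t, hP.stieltjesFunction.measure.rnDeriv volume t
      ≤ hQ.stieltjesFunction.measure.rnDeriv volume t + m t)
    (hσP : ∀ E : Set ℝ, MeasurableSet E →
      (hP.stieltjesFunction.measure.singularPart volume) E ≤ SING E)
    (hatomP : ∀ z : ℝ, hP.stieltjesFunction.measure {z} ≤ SING {z})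
    {u v : ℝ} (huv : u < v) :
    (P v - P u) - (Q v - Q u)
      ≤ ((volume.withDensity m) (Ioo u v)).toReal + (SING (Ioo u v)).toReal
        + (SING {u}).toReal + (SING {v}).toReal := by
  set μP := hP.stieltjesFunction.measure with hμP
  set μQ := hQ.stieltjesFunction.measure with hμQ
  set pn := μP.rnDeriv volume with hpn
  set qn := μQ.rnDeriv volume with hqn
  have hPdec : μP (Ioo u v) = μP.singularPart volume (Ioo u v) + ∫⁻ t in Ioo u v, pn t ∂volume := by
    conv_lhs => rw [μP.haveLebesgueDecomposition_add volume]
    rw [Measure.add_apply, withDensity_apply _ measurableSet_Ioo]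
  have hQdec : μQ (Ioo u v) = μQ.singularPart volume (Ioo u v) + ∫⁻ t in Ioo u v, qn t ∂volume := by
    conv_lhs => rw [μQ.haveLebesgueDecomposition_add volume]
    rw [Measure.add_apply, withDensity_apply _ measurableSet_Ioo]
  have hfm : ∫⁻ t in Ioo u v, m t ∂volume ≠ ⊤ :=
    ne_top_of_le_ne_top hmfin (setLIntegral_le_lintegral _ _)
  have hfp : ∫⁻ t in Ioo u v, pn t ∂volume ≠ ⊤ := by
    refine ne_top_of_le_ne_top (measure_ne_top μP (Ioo u v)) ?_
    rw [hPdec]; exact le_add_self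
  have hfq : ∫⁻ t in Ioo u v, qn t ∂volume ≠ ⊤ := by
    refine ne_top_of_le_ne_top (measure_ne_top μQ (Ioo u v)) ?_
    rw [hQdec]; exact le_add_self
  have h1 : P v - P u ≤ (μP (Icc u v)).toReal := by
    have := ENNReal.toReal_mono (measure_ne_top μP _) (ofReal_le_measure_Icc hP (u := u) (v := v))
    rwa [ENNReal.toReal_ofReal_eq_iff.2 (sub_nonneg.2 (hP huv.le))] at this
  have h2 : (∫⁻ t in Ioo u v, qn t ∂volume).toReal ≤ Q v - Q u := by
    have hle : ∫⁻ t in Ioo u v, qn t ∂volume ≤ ENNReal.ofReal (Q v - Q u) := by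
      refine le_trans ?_ (measure_Ioo_le_ofReal hQ)
      rw [hQdec]; exact le_add_self
    have := ENNReal.toReal_mono ENNReal.ofReal_ne_top hle
    rwa [ENNReal.toReal_ofReal (sub_nonneg.2 (hQ huv.le))] at this
  have h3 : (μP (Icc u v)).toReal
      = (μP.singularPart volume (Ioo u v)).toReal + (∫⁻ t in Ioo u v, pn t ∂volume).toReal
        + (μP {u}).toReal + (μP {v}).toReal := by
    have hσfin : μP.singularPart volume (Ioo u v) ≠ ⊤ :=
      ne_top_of_le_ne_top (measure_ne_top μP (Ioo u v)) (by rw [hPdec]; exact self_le_add_right _ _)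
    have f1 : μP.singularPart volume (Ioo u v) + ∫⁻ t in Ioo u v, pn t ∂volume ≠ ⊤ :=
      ENNReal.add_ne_top.2 ⟨hσfin, hfp⟩
    have f2 : μP.singularPart volume (Ioo u v) + (∫⁻ t in Ioo u v, pn t ∂volume) + μP {u} ≠ ⊤ :=
      ENNReal.add_ne_top.2 ⟨f1, measure_ne_top _ _⟩
    rw [measure_Icc_split huv, hPdec, ENNReal.toReal_add f2 (measure_ne_top _ _),
      ENNReal.toReal_add f1 (measure_ne_top _ _), ENNReal.toReal_add hσfin hfp]
  have h4 : (∫⁻ t in Ioo u v, pn t ∂volume).toReal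
      ≤ (∫⁻ t in Ioo u v, qn t ∂volume).toReal + (∫⁻ t in Ioo u v, m t ∂volume).toReal := by
    rw [← ENNReal.toReal_add hfq hfm]
    refine ENNReal.toReal_mono (ENNReal.add_ne_top.2 ⟨hfq, hfm⟩) ?_
    rw [← lintegral_add_right _ hm]
    exact lintegral_mono fun t => hmP t
  have h5 : (μP.singularPart volume (Ioo u v)).toReal ≤ (SING (Ioo u v)).toReal :=
    ENNReal.toReal_mono (measure_ne_top _ _) (hσP _ measurableSet_Ioo)
  have h6 : (μP {u}).toReal ≤ (SING {u}).toReal :=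
    ENNReal.toReal_mono (measure_ne_top _ _) (hatomP u)
  have h7 : (μP {v}).toReal ≤ (SING {v}).toReal :=
    ENNReal.toReal_mono (measure_ne_top _ _) (hatomP v)
  have h8 : ((volume.withDensity m) (Ioo u v)).toReal = (∫⁻ t in Ioo u v, m t ∂volume).toReal := by
    rw [withDensity_apply _ measurableSet_Ioo]
  linarith

lemma evar_le_measure {X : Type*} [MetricSpace X] (γ : ℝ → X) {u v : ℝ}
    (ρ SING : Measure ℝ)
    (hseg : ∀ a b, u ≤ a → a < b → b ≤ v →
      edist (γ b) (γ a) ≤ ρ (Ioo a b) + (SING {a} + SING {b})) :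
    eVariationOn γ (Icc u v) ≤ ρ (Icc u v) + 2 * SING (Icc u v) := by
  classical
  rw [eVariationOn]
  refine iSup_le ?_
  rintro ⟨N, w, hw_mono, hw_mem⟩
  dsimp only
  set T : Finset ℕ := (Finset.range N).filter (fun i => w i < w (i + 1)) with hT
  have hTlt : ∀ i ∈ T, w i < w (i + 1) := fun i hi => (Finset.mem_filter.1 hi).2
  have hstep1 : ∑ i ∈ Finset.range N, edist (γ (w (i + 1))) (γ (w i))
      = ∑ i ∈ T, edist (γ (w (i + 1))) (γ (w i)) := by
    refine (Finset.sum_filter_of_ne ?_).symm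
    intro i _ hne
    rcases lt_or_eq_of_le (hw_mono (Nat.le_succ i)) with h | h
    · exact h
    · exact absurd (by rw [← h]; exact edist_self _) hne
  have hwmemIcc : ∀ i, w i ∈ Icc u v := fun i => hw_mem i
  have hstep2 : ∑ i ∈ T, edist (γ (w (i + 1))) (γ (w i))
      ≤ ∑ i ∈ T, (ρ (Ioo (w i) (w (i + 1))) + (SING {w i} + SING {w (i + 1)})) := by
    refine Finset.sum_le_sum fun i hi => ?_
    exact hseg _ _ (hwmemIcc i).1 (hTlt i hi) (hwmemIcc (i + 1)).2
  have hmono_ne : ∀ i ∈ T, ∀ j ∈ T, i < j → w (i + 1) ≤ w j := fun i hi j _ hij =>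
    hw_mono (Nat.succ_le_of_lt hij)
  have hρsum : ∑ i ∈ T, ρ (Ioo (w i) (w (i + 1))) ≤ ρ (Icc u v) := by
    rw [← measure_biUnion_finset ?_ (fun i _ => measurableSet_Ioo)]
    · refine measure_mono ?_
      refine iUnion₂_subset fun i _ => ?_
      exact fun x hx => ⟨(hwmemIcc i).1.trans hx.1.le, hx.2.le.trans (hwmemIcc (i + 1)).2⟩
    · intro i hi j hj hij
      rcases hij.lt_or_gt with h | h
      · refine Set.disjoint_left.2 fun x hx hx' => ?_
        exact absurd ((hx.2.trans_le (hmono_ne i hi j hj h)).trans hx'.1) (lt_irrefl x)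
      · refine Set.disjoint_left.2 fun x hx hx' => ?_
        exact absurd ((hx'.2.trans_le (hmono_ne j hj i hi h)).trans hx.1) (lt_irrefl x)
  have hs1 : ∑ i ∈ T, SING {w i} ≤ SING (Icc u v) := by
    rw [← measure_biUnion_finset ?_ (fun i _ => measurableSet_singleton _)]
    · refine measure_mono (iUnion₂_subset fun i _ => ?_)
      intro x hx
      rw [mem_singleton_iff] at hx
      exact hx ▸ hwmemIcc i
    · intro i hi j hj hij
      simp only [disjoint_singleton]
      rcases hij.lt_or_gt with h | h
      · exact ((hTlt i hi).trans_le (hmono_ne i hi j hj h)).ne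
      · exact ((hTlt j hj).trans_le (hmono_ne j hj i hi h)).ne'
  have hs2 : ∑ i ∈ T, SING {w (i + 1)} ≤ SING (Icc u v) := by
    rw [← measure_biUnion_finset ?_ (fun i _ => measurableSet_singleton _)]
    · refine measure_mono (iUnion₂_subset fun i _ => ?_)
      intro x hx
      rw [mem_singleton_iff] at hx
      exact hx ▸ hwmemIcc (i + 1)
    · intro i hi j hj hij
      simp only [disjoint_singleton]
      rcases hij.lt_or_gt with h | h
      · exact ((hmono_ne i hi j hj h).trans_lt (hTlt j hj)).ne
      · exact ((hmono_ne j hj i hi h).trans_lt (hTlt i hi)).ne'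
  calc ∑ i ∈ Finset.range N, edist (γ (w (i + 1))) (γ (w i))
      = ∑ i ∈ T, edist (γ (w (i + 1))) (γ (w i)) := hstep1
    _ ≤ ∑ i ∈ T, (ρ (Ioo (w i) (w (i + 1))) + (SING {w i} + SING {w (i + 1)})) := hstep2
    _ = ∑ i ∈ T, ρ (Ioo (w i) (w (i + 1)))
        + (∑ i ∈ T, SING {w i} + ∑ i ∈ T, SING {w (i + 1)}) := by
        rw [Finset.sum_add_distrib, Finset.sum_add_distrib]
    _ ≤ ρ (Icc u v) + (SING (Icc u v) + SING (Icc u v)) :=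
        add_le_add hρsum (add_le_add hs1 hs2)
    _ = ρ (Icc u v) + 2 * SING (Icc u v) := by rw [two_mul]

lemma le_measure_Icc_of_forall {ν : Measure ℝ} [IsFiniteMeasure ν] {a b : ℝ} {x : ℝ≥0∞}
    {K : ℕ} (h : ∀ k : ℕ, K ≤ k → x ≤ ν (Icc (a - 1 / (k + 1)) (b + 1 / (k + 1)))) :
    x ≤ ν (Icc a b) := by
  have hmono : Antitone (fun k : ℕ => Icc (a - 1 / (k + 1 : ℝ)) (b + 1 / (k + 1 : ℝ))) := by
    intro k l hkl
    have h1 : (1 : ℝ) / (l + 1) ≤ 1 / (k + 1) := by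
      apply one_div_le_one_div_of_le
      · positivity
      · exact_mod_cast add_le_add_left (Nat.cast_le.2 hkl) 1
    exact Icc_subset_Icc (by linarith) (by linarith)
  have hInter : ⋂ k : ℕ, Icc (a - 1 / (k + 1 : ℝ)) (b + 1 / (k + 1 : ℝ)) = Icc a b := by
    ext z
    simp only [mem_iInter, mem_Icc]
    constructor
    · intro hz
      constructor
      · by_contra hlt
        push_neg at hlt
        obtain ⟨k, hk⟩ := exists_nat_one_div_lt (sub_pos.2 hlt)
        have := (hz k).1
        linarith
      · by_contra hlt
        push_neg at hlt
        obtain ⟨k, hk⟩ := exists_nat_one_div_lt (sub_pos.2 hlt)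
        have := (hz k).2
        linarith
    · intro hz k
      have : (0 : ℝ) < 1 / (k + 1) := by positivity
      exact ⟨by linarith [hz.1], by linarith [hz.2]⟩
  have hT := tendsto_measure_iInter_atTop (μ := ν)
    (fun k => measurableSet_Icc.nullMeasurableSet) hmono ⟨0, measure_ne_top ν _⟩
  rw [hInter] at hT
  exact ge_of_tendsto hT (eventually_atTop.2 ⟨K, h⟩)

lemma rnDeriv_le_of_Icc_le {μ ν : Measure ℝ} [IsFiniteMeasure μ] [IsFiniteMeasure ν]
    {p q : ℝ} (h : ∀ a b, p < a → a ≤ b → b < q → μ (Icc a b) ≤ ν (Icc a b)) :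
    ∀ᵐ t, t ∈ Ioo p q → μ.rnDeriv volume t ≤ ν.rnDeriv volume t := by
  filter_upwards [Besicovitch.ae_tendsto_rnDeriv μ volume,
    Besicovitch.ae_tendsto_rnDeriv ν volume] with t h1 h2 ht
  refine le_of_tendsto_of_tendsto h1 h2 ?_
  have hmem : Ioo (0 : ℝ) (min (t - p) (q - t)) ∈ 𝓝[>] (0 : ℝ) :=
    Ioo_mem_nhdsGT_of_mem ⟨le_rfl, lt_min (by linarith [ht.1]) (by linarith [ht.2])⟩
  filter_upwards [hmem] with r hr
  have hball : Metric.closedBall t r = Icc (t - r) (t + r) := Real.closedBall_eq_Icc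
  have hlt1 : p < t - r := by
    have := hr.2.trans_le (min_le_left _ _)
    linarith
  have hlt2 : t + r < q := by
    have := hr.2.trans_le (min_le_right _ _)
    linarith
  rw [hball]
  exact ENNReal.div_le_div_right (h _ _ hlt1 (by linarith [hr.1.le]) hlt2) _


theorem main_local {X : Type*} [MetricSpace X] (γ : ℝ → X) {p q : ℝ} (hpq : p < q)
    (hfin : eVariationOn γ (Icc p q) ≠ ⊤) :
    ∀ᵐ t, t ∈ Ioo p q →
      (Filter.liminf (fun s => eVariationOn γ (Set.uIcc t s) / ENNReal.ofReal |s - t|)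
          (𝓝[≠] t) = 0) ∨
      Tendsto (fun s => dist (γ s) (γ t) / (eVariationOn γ (Set.uIcc t s)).toReal)
        (𝓝[≠] t) (𝓝 1) := by
  classical
  -- the clamp to [p,q]
  set c : ℝ → ℝ := fun t => max p (min q t) with hc_def
  have hc_mem : ∀ t, c t ∈ Icc p q := fun t =>
    ⟨le_max_left _ _, max_le hpq.le (min_le_left _ _)⟩
  have hc_mono : Monotone c := fun a b hab => by
    dsimp only [c]
    exact max_le_max le_rfl (min_le_min le_rfl hab)
  have hc_id : ∀ t, t ∈ Icc p q → c t = t := fun t ht => by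
    dsimp only [c]; rw [min_eq_right ht.2, max_eq_right ht.1]
  have hc_idem : ∀ t, c (c t) = c t := fun t => hc_id _ (hc_mem t)
  have hc_lo : ∀ t, t ≤ p → c t = p := fun t ht => by
    dsimp only [c]; rw [min_eq_right (ht.trans hpq.le), max_eq_left ht]
  have hc_hi : ∀ t, q ≤ t → c t = q := fun t ht => by
    dsimp only [c]; rw [min_eq_left ht, max_eq_right hpq.le]
  -- finiteness of variation on subintervals
  have hsub : ∀ {a b : ℝ}, p ≤ a → b ≤ q → eVariationOn γ (Icc a b) ≠ ⊤ := by
    intro a b ha hb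
    refine ne_top_of_le_ne_top hfin (eVariationOn.mono γ ?_)
    exact fun x hx => ⟨ha.trans hx.1, hx.2.trans hb⟩
  -- the cumulative variation function
  set V : ℝ → ℝ := fun t => (eVariationOn γ (Icc p (c t))).toReal with hV_def
  have hVc : ∀ t, V (c t) = V t := fun t => by dsimp only [V]; rw [hc_idem]
  have hVar : ∀ u v, p ≤ u → u ≤ v → v ≤ q →
      ENNReal.ofReal (V v - V u) = eVariationOn γ (Icc u v) := by
    intro u v hu huv hv
    have hcu : c u = u := hc_id _ ⟨hu, huv.trans hv⟩
    have hcv : c v = v := hc_id _ ⟨hu.trans huv, hv⟩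
    have hadd : eVariationOn γ (Icc p u) + eVariationOn γ (Icc u v)
        = eVariationOn γ (Icc p v) := by
      have := eVariationOn.Icc_add_Icc γ (s := univ) hu huv (mem_univ u)
      simpa using this
    dsimp only [V]
    rw [hcu, hcv]
    have h1 : eVariationOn γ (Icc p u) ≠ ⊤ := hsub le_rfl (huv.trans hv)
    have h2 : eVariationOn γ (Icc u v) ≠ ⊤ := hsub hu hv
    rw [← hadd, ENNReal.toReal_add h1 h2]
    rw [add_sub_cancel_left, ENNReal.ofReal_toReal h2]
  have hVmono : Monotone V := by
    intro a b hab
    dsimp only [V]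
    refine ENNReal.toReal_mono (hsub le_rfl (hc_mem b).2) (eVariationOn.mono γ ?_)
    exact Icc_subset_Icc le_rfl (hc_mono hab)
  have hVnn : ∀ u v, u ≤ v → 0 ≤ V v - V u := fun u v huv => by
    simp [sub_nonneg, hVmono huv]
  -- distance is dominated by variation increments
  have hdistV : ∀ u v, u ≤ v → dist (γ (c u)) (γ (c v)) ≤ V v - V u := by
    intro u v huv
    have hcc : c u ≤ c v := hc_mono huv
    have h1 : edist (γ (c u)) (γ (c v)) ≤ eVariationOn γ (Icc (c u) (c v)) :=
      eVariationOn.edist_le γ ⟨le_rfl, hcc⟩ ⟨hcc, le_rfl⟩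
    have h2 : ENNReal.ofReal (V v - V u) = eVariationOn γ (Icc (c u) (c v)) := by
      rw [← hVc u, ← hVc v]
      exact hVar _ _ (hc_mem u).1 hcc (hc_mem v).2
    rw [← h2] at h1
    rw [dist_edist]
    calc (edist (γ (c u)) (γ (c v))).toReal
        ≤ (ENNReal.ofReal (V v - V u)).toReal := ENNReal.toReal_mono ENNReal.ofReal_ne_top h1
      _ = V v - V u := ENNReal.toReal_ofReal (hVnn u v huv)
  have hdist2 : ∀ a b, a ∈ Icc p q → b ∈ Icc p q → dist (γ a) (γ b) ≤ |V b - V a| := by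
    intro a b ha hb
    rcases le_total a b with h | h
    · calc dist (γ a) (γ b) = dist (γ (c a)) (γ (c b)) := by rw [hc_id a ha, hc_id b hb]
        _ ≤ V b - V a := hdistV a b h
        _ ≤ |V b - V a| := le_abs_self _
    · calc dist (γ a) (γ b) = dist (γ (c b)) (γ (c a)) := by
            rw [hc_id a ha, hc_id b hb, dist_comm]
        _ ≤ V a - V b := hdistV b a h
        _ ≤ |V b - V a| := by rw [abs_sub_comm]; exact le_abs_self _
  -- a countable set of points whose images are dense in the image of γ on [p,q]
  obtain ⟨x, hx⟩ : ∃ x : ℕ → X, ∀ t, t ∈ Icc p q → ∀ ε : ℝ, 0 < ε →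
      ∃ n, dist (γ t) (x n) < ε := by
    set S : Set ℝ := V '' Icc p q with hS
    have hSne : S.Nonempty := ⟨V p, p, ⟨le_rfl, hpq.le⟩, rfl⟩
    haveI : Nonempty ↥S := hSne.to_subtype
    obtain ⟨t0, ht0c, ht0d⟩ := TopologicalSpace.exists_countable_dense (↥S)
    set D : Set ℝ := Subtype.val '' t0 with hD
    have hDc : D.Countable := ht0c.image _
    have hDne : D.Nonempty := (ht0d.nonempty).image _
    have hDS : D ⊆ S := Subtype.coe_image_subset _ _
    have hdense : ∀ y ∈ S, ∀ ε : ℝ, 0 < ε → ∃ d ∈ D, |y - d| < ε := by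
      intro y hy ε hε
      have h1 : (⟨y, hy⟩ : ↥S) ∈ closure t0 := ht0d _
      rcases Metric.mem_closure_iff.1 h1 ε hε with ⟨b, hb, hdb⟩
      refine ⟨b.1, mem_image_of_mem _ hb, ?_⟩
      rw [Subtype.dist_eq, Real.dist_eq] at hdb
      exact hdb
    obtain ⟨e, he⟩ := Set.Countable.exists_eq_range hDc hDne
    have hch : ∀ n : ℕ, ∃ w ∈ Icc p q, V w = e n := by
      intro n
      have : e n ∈ D := by rw [he]; exact ⟨n, rfl⟩
      rcases hDS this with ⟨w, hw, hwv⟩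
      exact ⟨w, hw, hwv⟩
    choose u hu1 hu2 using hch
    refine ⟨fun n => γ (u n), fun t ht ε hε => ?_⟩
    rcases hdense (V t) ⟨t, ht, rfl⟩ ε hε with ⟨d, hd, hdlt⟩
    rw [he] at hd
    rcases hd with ⟨n, rfl⟩
    refine ⟨n, lt_of_le_of_lt (hdist2 t (u n) ht (hu1 n)) ?_⟩
    rw [hu2 n, abs_sub_comm]
    exact hdlt
  -- the comparison functions
  set f : ℕ → ℝ → ℝ := fun n t => dist (γ (c t)) (x n) with hf_def
  have hfV : ∀ n u v, u ≤ v → |f n v - f n u| ≤ V v - V u := by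
    intro n u v huv
    calc |f n v - f n u| ≤ dist (γ (c v)) (γ (c u)) := abs_dist_sub_le _ _ _
      _ = dist (γ (c u)) (γ (c v)) := dist_comm _ _
      _ ≤ V v - V u := hdistV u v huv
  set P : ℕ → ℝ → ℝ := fun n t => (V t + f n t) / 2 with hP_def
  set Q : ℕ → ℝ → ℝ := fun n t => (V t - f n t) / 2 with hQ_def
  have hPmono : ∀ n, Monotone (P n) := by
    intro n a b hab
    have h2 := abs_le.1 (hfV n a b hab)
    dsimp only [P]
    linarith [h2.1]
  have hQmono : ∀ n, Monotone (Q n) := by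
    intro n a b hab
    have h2 := abs_le.1 (hfV n a b hab)
    dsimp only [Q]
    linarith [h2.2]
  have hPQdiff : ∀ n t, P n t - Q n t = f n t := fun n t => by dsimp only [P, Q]; ring
  have hPQsum : ∀ n t, P n t + Q n t = V t := fun n t => by dsimp only [P, Q]; ring
  -- the Stieltjes measures
  set μV : Measure ℝ := hVmono.stieltjesFunction.measure with hμV
  set μP : ℕ → Measure ℝ := fun n => ((hPmono n).stieltjesFunction).measure with hμP
  set μQ : ℕ → Measure ℝ := fun n => ((hQmono n).stieltjesFunction).measure with hμQ
  have hsplit : ∀ n, μV = μP n + μQ n := by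
    intro n
    have heq : hVmono.stieltjesFunction
        = (hPmono n).stieltjesFunction + (hQmono n).stieltjesFunction := by
      ext z
      show rightLim V z = rightLim (P n) z + rightLim (Q n) z
      refine rightLim_eq_of_tendsto ?_
      exact Tendsto.congr (fun y => hPQsum n y)
        (((hPmono n).tendsto_rightLim z).add ((hQmono n).tendsto_rightLim z))
    rw [hμV, heq, StieltjesFunction.measure_add]
  -- finiteness
  have hVlo : ∀ t, t ≤ p → V t = V p := fun t ht => by
    dsimp only [V]; rw [hc_lo t ht, hc_lo p le_rfl]
  have hVhi : ∀ t, q ≤ t → V t = V q := fun t ht => by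
    dsimp only [V]; rw [hc_hi t ht, hc_hi q le_rfl]
  have hflo : ∀ n t, t ≤ p → f n t = f n p := fun n t ht => by
    dsimp only [f]; rw [hc_lo t ht, hc_lo p le_rfl]
  have hfhi : ∀ n t, q ≤ t → f n t = f n q := fun n t ht => by
    dsimp only [f]; rw [hc_hi t ht, hc_hi q le_rfl]
  haveI hμVfin : IsFiniteMeasure μV := stieltjes_finite hVmono hVlo hVhi
  have hμPfin : ∀ n, IsFiniteMeasure (μP n) := fun n =>
    stieltjes_finite (hPmono n)
      (fun t ht => by dsimp only [P]; rw [hVlo t ht, hflo n t ht])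
      (fun t ht => by dsimp only [P]; rw [hVhi t ht, hfhi n t ht])
  have hμQfin : ∀ n, IsFiniteMeasure (μQ n) := fun n =>
    stieltjes_finite (hQmono n)
      (fun t ht => by dsimp only [Q]; rw [hVlo t ht, hflo n t ht])
      (fun t ht => by dsimp only [Q]; rw [hVhi t ht, hfhi n t ht])
  -- singular carriers
  have hcarr : ∀ n : ℕ, ∃ B : Set ℝ, MeasurableSet B ∧ volume B = 0 ∧
      (μP n).singularPart volume Bᶜ = 0 ∧ (μQ n).singularPart volume Bᶜ = 0 := by
    intro n
    obtain ⟨s1, hs1m, hs1P, hs1v⟩ := Measure.mutuallySingular_singularPart (μP n) volume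
    obtain ⟨s2, hs2m, hs2Q, hs2v⟩ := Measure.mutuallySingular_singularPart (μQ n) volume
    refine ⟨s1ᶜ ∪ s2ᶜ, (hs1m.compl.union hs2m.compl), ?_, ?_, ?_⟩
    · refine le_antisymm (le_trans (measure_union_le _ _) ?_) zero_le
      rw [hs1v, hs2v, add_zero]
    · rw [compl_union, compl_compl, compl_compl]
      exact le_antisymm (le_trans (measure_mono inter_subset_left) hs1P.le) zero_le
    · rw [compl_union, compl_compl, compl_compl]
      exact le_antisymm (le_trans (measure_mono inter_subset_right) hs2Q.le) zero_le
  choose BC hBCm hBCnull hBCP hBCQ using hcarr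
  -- the atoms of μV
  have hDatom : Set.Countable {z : ℝ | μV {z} ≠ 0} := by
    have := MeasureTheory.Measure.countable_meas_pos_of_disjoint_iUnion₀ (μ := μV)
      (As := fun z : ℝ => ({z} : Set ℝ))
      (fun z => (measurableSet_singleton z).nullMeasurableSet)
      (fun i j hij => Disjoint.aedisjoint (by simpa [disjoint_singleton] using hij))
    refine this.mono fun z hz => ?_
    simpa [pos_iff_ne_zero] using hz
  set B : Set ℝ := (⋃ n, BC n) ∪ {z : ℝ | μV {z} ≠ 0} with hB_def
  have hBmeas : MeasurableSet B :=
    (MeasurableSet.iUnion hBCm).union hDatom.measurableSet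
  have hBnull : volume B = 0 := by
    refine le_antisymm (le_trans (measure_union_le _ _) ?_) zero_le
    rw [measure_iUnion_null hBCnull, hDatom.measure_zero, add_zero]
  set SING : Measure ℝ := μV.restrict B with hSING
  haveI hSINGfin : IsFiniteMeasure SING := by
    constructor
    rw [hSING, Measure.restrict_apply_univ]
    exact measure_lt_top _ _
  have hσP : ∀ n, ∀ E : Set ℝ, MeasurableSet E → (μP n).singularPart volume E ≤ SING E := by
    intro n E hE
    have hsp : (μP n).singularPart volume E
        ≤ (μP n).singularPart volume (E ∩ BC n) + (μP n).singularPart volume (E \ BC n) := by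
      rw [← measure_union (disjoint_sdiff_right.mono_left inter_subset_right)
        (hE.diff (hBCm n))]
      exact measure_mono (by intro z hz; by_cases h : z ∈ BC n
                             · exact Or.inl ⟨hz, h⟩
                             · exact Or.inr ⟨hz, h⟩)
    have h2 : (μP n).singularPart volume (E \ BC n) = 0 :=
      le_antisymm (le_trans (measure_mono (fun z hz => hz.2)) (hBCP n).le) zero_le
    have h3 : (μP n).singularPart volume (E ∩ BC n) ≤ μP n (E ∩ BC n) :=
      Measure.le_iff'.1 (Measure.singularPart_le _ _) _
    have h4 : μP n (E ∩ BC n) ≤ μV (E ∩ BC n) := by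
      rw [hsplit n, Measure.add_apply]
      exact self_le_add_right _ _
    have h5 : μV (E ∩ BC n) ≤ SING E := by
      rw [hSING, Measure.restrict_apply hE]
      exact measure_mono (inter_subset_inter le_rfl
        (subset_union_left.trans' (subset_iUnion BC n)))
    calc (μP n).singularPart volume E ≤ _ := hsp
      _ = (μP n).singularPart volume (E ∩ BC n) := by rw [h2, add_zero]
      _ ≤ SING E := le_trans h3 (le_trans h4 h5)
  have hσQ : ∀ n, ∀ E : Set ℝ, MeasurableSet E → (μQ n).singularPart volume E ≤ SING E := by
    intro n E hE
    have hsp : (μQ n).singularPart volume E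
        ≤ (μQ n).singularPart volume (E ∩ BC n) + (μQ n).singularPart volume (E \ BC n) := by
      rw [← measure_union (disjoint_sdiff_right.mono_left inter_subset_right)
        (hE.diff (hBCm n))]
      exact measure_mono (by intro z hz; by_cases h : z ∈ BC n
                             · exact Or.inl ⟨hz, h⟩
                             · exact Or.inr ⟨hz, h⟩)
    have h2 : (μQ n).singularPart volume (E \ BC n) = 0 :=
      le_antisymm (le_trans (measure_mono (fun z hz => hz.2)) (hBCQ n).le) zero_le
    have h3 : (μQ n).singularPart volume (E ∩ BC n) ≤ μQ n (E ∩ BC n) :=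
      Measure.le_iff'.1 (Measure.singularPart_le _ _) _
    have h4 : μQ n (E ∩ BC n) ≤ μV (E ∩ BC n) := by
      rw [hsplit n, Measure.add_apply]
      exact self_le_add_left _ _
    have h5 : μV (E ∩ BC n) ≤ SING E := by
      rw [hSING, Measure.restrict_apply hE]
      exact measure_mono (inter_subset_inter le_rfl
        (subset_union_left.trans' (subset_iUnion BC n)))
    calc (μQ n).singularPart volume E ≤ _ := hsp
      _ = (μQ n).singularPart volume (E ∩ BC n) := by rw [h2, add_zero]
      _ ≤ SING E := le_trans h3 (le_trans h4 h5)
  have hatomV : ∀ z : ℝ, μV {z} ≤ SING {z} := by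
    intro z
    by_cases h : μV {z} = 0
    · rw [h]; exact zero_le
    · rw [hSING, Measure.restrict_apply (measurableSet_singleton z)]
      have : ({z} : Set ℝ) ∩ B = {z} := by
        rw [inter_eq_left]
        exact singleton_subset_iff.2 (Or.inr h)
      rw [this]
  have hatomP : ∀ n, ∀ z : ℝ, μP n {z} ≤ SING {z} := by
    intro n z
    refine le_trans ?_ (hatomV z)
    rw [hsplit n, Measure.add_apply]
    exact self_le_add_right _ _
  have hatomQ : ∀ n, ∀ z : ℝ, μQ n {z} ≤ SING {z} := by
    intro n z
    refine le_trans ?_ (hatomV z)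
    rw [hsplit n, Measure.add_apply]
    exact self_le_add_left _ _
  -- the density sup function
  set pn : ℕ → ℝ → ℝ≥0∞ := fun n => (μP n).rnDeriv volume with hpn_def
  set qn : ℕ → ℝ → ℝ≥0∞ := fun n => (μQ n).rnDeriv volume with hqn_def
  set m : ℝ → ℝ≥0∞ := fun t => ⨆ n : ℕ, ((pn n t - qn n t) ⊔ (qn n t - pn n t)) with hm_def
  have hm_meas : Measurable m := by
    refine Measurable.iSup fun n => Measurable.sup ?_ ?_
    · exact (Measure.measurable_rnDeriv _ _).sub (Measure.measurable_rnDeriv _ _)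
    · exact (Measure.measurable_rnDeriv _ _).sub (Measure.measurable_rnDeriv _ _)
  -- m is a.e. bounded by the density of μV
  have hPle : ∀ n, ∀ᵐ t, pn n t ≤ μV.rnDeriv volume t := by
    intro n
    haveI := hμPfin n
    filter_upwards [Besicovitch.ae_tendsto_rnDeriv (μP n) volume,
      Besicovitch.ae_tendsto_rnDeriv μV volume] with t h1 h2
    refine le_of_tendsto_of_tendsto h1 h2 (Eventually.of_forall fun r => ?_)
    refine ENNReal.div_le_div_right ?_ _
    rw [hsplit n, Measure.add_apply]
    exact self_le_add_right _ _
  have hQle : ∀ n, ∀ᵐ t, qn n t ≤ μV.rnDeriv volume t := by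
    intro n
    haveI := hμQfin n
    filter_upwards [Besicovitch.ae_tendsto_rnDeriv (μQ n) volume,
      Besicovitch.ae_tendsto_rnDeriv μV volume] with t h1 h2
    refine le_of_tendsto_of_tendsto h1 h2 (Eventually.of_forall fun r => ?_)
    refine ENNReal.div_le_div_right ?_ _
    rw [hsplit n, Measure.add_apply]
    exact self_le_add_left _ _
  have hmG : ∀ᵐ t, m t ≤ μV.rnDeriv volume t := by
    filter_upwards [ae_all_iff.2 hPle, ae_all_iff.2 hQle] with t h1 h2
    refine iSup_le fun n => sup_le ?_ ?_
    · exact le_trans tsub_le_self (h1 n)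
    · exact le_trans tsub_le_self (h2 n)
  have hmint : ∫⁻ t, m t ∂(volume : Measure ℝ) ≠ ⊤ := by
    refine ne_top_of_le_ne_top (Measure.lintegral_rnDeriv_lt_top μV volume).ne
      (lintegral_mono_ae hmG)
  -- the comparison measures
  set WD : Measure ℝ := volume.withDensity m with hWD
  haveI hWDfin : IsFiniteMeasure WD := by
    constructor
    rw [hWD, withDensity_apply _ MeasurableSet.univ, Measure.restrict_univ]
    exact hmint.lt_top
  set ρ : Measure ℝ := WD + SING with hρ
  set ν : Measure ℝ := WD + (3 : ℝ≥0∞) • SING with hν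
  haveI hSING3fin : IsFiniteMeasure ((3 : ℝ≥0∞) • SING) := by
    constructor
    rw [Measure.smul_apply, smul_eq_mul]
    exact ENNReal.mul_lt_top (by norm_num) (measure_lt_top _ _)
  haveI hνfin : IsFiniteMeasure ν := by
    rw [hν]; infer_instance
  -- pointwise bound: pn ≤ qn + m and qn ≤ pn + m
  have hmP : ∀ n t, pn n t ≤ qn n t + m t := by
    intro n t
    refine le_trans (le_tsub_add : pn n t ≤ pn n t - qn n t + qn n t) ?_
    rw [add_comm]
    refine add_le_add le_rfl ?_
    exact le_trans (le_sup_left) (le_iSup (fun k => (pn k t - qn k t) ⊔ (qn k t - pn k t)) n)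
  have hmQ : ∀ n t, qn n t ≤ pn n t + m t := by
    intro n t
    refine le_trans (le_tsub_add : qn n t ≤ qn n t - pn n t + pn n t) ?_
    rw [add_comm]
    refine add_le_add le_rfl ?_
    exact le_trans (le_sup_right) (le_iSup (fun k => (pn k t - qn k t) ⊔ (qn k t - pn k t)) n)
  -- segment estimate
  have hseg : ∀ a b, p ≤ a → a < b → b ≤ q →
      edist (γ b) (γ a) ≤ ρ (Ioo a b) + (SING {a} + SING {b}) := by
    intro a b hpa hab hbq
    have hR : dist (γ b) (γ a)
        ≤ (WD (Ioo a b)).toReal + (SING (Ioo a b)).toReal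
          + (SING {a}).toReal + (SING {b}).toReal := by
      refine le_of_forall_pos_le_add fun ε hε => ?_
      obtain ⟨n, hn⟩ := hx a ⟨hpa, hab.le.trans hbq⟩ (ε / 2) (by linarith)
      haveI := hμPfin n
      haveI := hμQfin n
      have hfa : f n a = dist (γ a) (x n) := by
        dsimp only [f]; rw [hc_id a ⟨hpa, hab.le.trans hbq⟩]
      have hfb : f n b = dist (γ b) (x n) := by
        dsimp only [f]; rw [hc_id b ⟨hpa.trans hab.le, hbq⟩]
      have h1 : dist (γ b) (γ a) ≤ |f n b - f n a| + ε := by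
        have htri : dist (γ b) (x n) + dist (γ a) (x n) ≥ dist (γ b) (γ a) :=
          dist_triangle_right _ _ _
        have habs : f n b - f n a ≤ |f n b - f n a| := le_abs_self _
        rw [hfa, hfb] at *
        linarith
      have h2 := segment_bound_one (P n) (Q n) (hPmono n) (hQmono n) SING m hm_meas hmint
        (hmP n) (hσP n) (hatomP n) hab
      have h3 := segment_bound_one (Q n) (P n) (hQmono n) (hPmono n) SING m hm_meas hmint
        (hmQ n) (hσQ n) (hatomQ n) hab
      have h4 : |f n b - f n a|
          ≤ (WD (Ioo a b)).toReal + (SING (Ioo a b)).toReal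
            + (SING {a}).toReal + (SING {b}).toReal := by
        rw [← hPQdiff n a, ← hPQdiff n b]
        rw [abs_sub_le_iff]
        constructor
        · calc P n b - Q n b - (P n a - Q n a) = (P n b - P n a) - (Q n b - Q n a) := by ring
            _ ≤ _ := h2
        · calc P n a - Q n a - (P n b - Q n b) = (Q n b - Q n a) - (P n b - P n a) := by ring
            _ ≤ _ := h3
      linarith
    rw [edist_dist]
    have hfin4 : WD (Ioo a b) + SING (Ioo a b) + SING {a} + SING {b} ≠ ⊤ := by
      refine ENNReal.add_ne_top.2 ⟨ENNReal.add_ne_top.2 ⟨ENNReal.add_ne_top.2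
        ⟨measure_ne_top _ _, measure_ne_top _ _⟩, measure_ne_top _ _⟩, measure_ne_top _ _⟩
    calc ENNReal.ofReal (dist (γ b) (γ a))
        ≤ ENNReal.ofReal ((WD (Ioo a b)).toReal + (SING (Ioo a b)).toReal
          + (SING {a}).toReal + (SING {b}).toReal) := ENNReal.ofReal_le_ofReal hR
      _ = WD (Ioo a b) + SING (Ioo a b) + SING {a} + SING {b} := by
          rw [ENNReal.ofReal_add (by positivity) ENNReal.toReal_nonneg,
            ENNReal.ofReal_add (by positivity) ENNReal.toReal_nonneg,
            ENNReal.ofReal_add ENNReal.toReal_nonneg ENNReal.toReal_nonneg,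
            ENNReal.ofReal_toReal (measure_ne_top _ _),
            ENNReal.ofReal_toReal (measure_ne_top _ _),
            ENNReal.ofReal_toReal (measure_ne_top _ _),
            ENNReal.ofReal_toReal (measure_ne_top _ _)]
      _ = ρ (Ioo a b) + (SING {a} + SING {b}) := by
          rw [hρ, Measure.add_apply]
          ring
  -- variation is bounded by ν on subintervals
  have hvarle : ∀ a b, p ≤ a → a ≤ b → b ≤ q → eVariationOn γ (Icc a b) ≤ ν (Icc a b) := by
    intro a b hpa hab hbq
    have := evar_le_measure γ (u := a) (v := b) ρ SING
      (fun a' b' ha' hab' hb' => hseg a' b' (hpa.trans ha') hab' (hb'.trans hbq))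
    refine le_trans this ?_
    rw [hν, hρ, Measure.add_apply, Measure.add_apply, Measure.smul_apply, smul_eq_mul]
    have : (3 : ℝ≥0∞) = 1 + 2 := by norm_num
    rw [add_assoc]
    refine add_le_add le_rfl ?_
    rw [this, add_mul, one_mul]
  -- μV is dominated by ν on intervals inside (p,q)
  have hIccle : ∀ a b, p < a → a ≤ b → b < q → μV (Icc a b) ≤ ν (Icc a b) := by
    intro a b hpa hab hbq
    obtain ⟨K, hK⟩ := exists_nat_one_div_lt (show (0:ℝ) < min (a - p) (q - b) by
      exact lt_min (by linarith) (by linarith))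
    refine le_measure_Icc_of_forall (K := K) ?_
    intro k hk
    have hdk : (1 : ℝ) / (k + 1) ≤ 1 / (K + 1) := by
      apply one_div_le_one_div_of_le
      · positivity
      · exact_mod_cast add_le_add_left (Nat.cast_le.2 hk) 1
    have hgap := hK
    have h1 : (1 : ℝ) / (k + 1) < min (a - p) (q - b) := lt_of_le_of_lt hdk hK
    set ak := a - 1 / (k + 1 : ℝ) with hak
    set bk := b + 1 / (k + 1 : ℝ) with hbk
    have hpak : p ≤ ak := by
      have := lt_of_lt_of_le h1 (min_le_left _ _)
      dsimp only [ak]; linarith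
    have hbkq : bk ≤ q := by
      have := lt_of_lt_of_le h1 (min_le_right _ _)
      dsimp only [bk]; linarith
    have hposk : (0:ℝ) < 1 / (k + 1) := by positivity
    have hakbk : ak ≤ bk := by dsimp only [ak, bk]; linarith
    have hstep : μV (Icc a b) ≤ ENNReal.ofReal (V bk - V ak) := by
      rw [hμV, StieltjesFunction.measure_Icc]
      refine ENNReal.ofReal_le_ofReal ?_
      have hA : hVmono.stieltjesFunction b ≤ V bk :=
        hVmono.rightLim_le (by dsimp only [bk]; linarith)
      have hB : V ak ≤ leftLim (⇑hVmono.stieltjesFunction) a := by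
        refine le_trans (le_stieltjes hVmono ak) ?_
        exact hVmono.stieltjesFunction.mono.le_leftLim (by dsimp only [ak]; linarith)
      linarith
    rw [hVar ak bk hpak hakbk hbkq] at hstep
    exact le_trans hstep (hvarle ak bk hpak hakbk hbkq)
  -- comparison of densities
  have hrn1 : ∀ᵐ t, t ∈ Ioo p q → μV.rnDeriv volume t ≤ ν.rnDeriv volume t :=
    rnDeriv_le_of_Icc_le hIccle
  have hsing3 : (3 : ℝ≥0∞) • SING ⟂ₘ volume := by
    refine ⟨Bᶜ, hBmeas.compl, ?_, ?_⟩
    · rw [Measure.smul_apply, smul_eq_mul, hSING, Measure.restrict_apply hBmeas.compl]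
      rw [compl_inter_self, measure_empty, mul_zero]
    · rw [compl_compl]
      exact hBnull
  have hrn2 : m =ᵐ[volume] ν.rnDeriv volume := by
    refine Measure.eq_rnDeriv (μ := ν) hm_meas hsing3 ?_
    rw [hν, add_comm, hWD]
  -- derivative facts
  have hVd := hVmono.ae_hasDerivAt
  have hPd : ∀ᵐ t, ∀ n, HasDerivAt (P n) ((pn n t).toReal) t :=
    ae_all_iff.2 fun n => (hPmono n).ae_hasDerivAt
  have hQd : ∀ᵐ t, ∀ n, HasDerivAt (Q n) ((qn n t).toReal) t :=
    ae_all_iff.2 fun n => (hQmono n).ae_hasDerivAt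
  have hfinP : ∀ᵐ t, ∀ n, pn n t ≠ ⊤ := by
    refine ae_all_iff.2 fun n => ?_
    haveI := hμPfin n
    filter_upwards [Measure.rnDeriv_lt_top (μP n) volume] with t ht
    exact ht.ne
  have hfinQ : ∀ᵐ t, ∀ n, qn n t ≠ ⊤ := by
    refine ae_all_iff.2 fun n => ?_
    haveI := hμQfin n
    filter_upwards [Measure.rnDeriv_lt_top (μQ n) volume] with t ht
    exact ht.ne
  have hGfin : ∀ᵐ t, μV.rnDeriv volume t ≠ ⊤ := by
    filter_upwards [Measure.rnDeriv_lt_top μV volume] with t ht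
    exact ht.ne
  -- THE FINAL ARGUMENT
  filter_upwards [hVd, hPd, hQd, hfinP, hfinQ, hGfin, hrn1, hrn2] with t hVd' hPd' hQd'
    hfinP' hfinQ' hGfin' hrn1' hrn2' ht
  set L : ℝ := (μV.rnDeriv volume t).toReal with hL_def
  have hLnn : 0 ≤ L := ENNReal.toReal_nonneg
  have hGL : μV.rnDeriv volume t = ENNReal.ofReal L := by
    rw [hL_def, ENNReal.ofReal_toReal hGfin']
  have hGm : μV.rnDeriv volume t ≤ m t := by rw [hrn2']; exact hrn1' ht
  have hslopeV : Tendsto (fun s => |V s - V t| / |s - t|) (𝓝[≠] t) (𝓝 L) := by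
    have h := hasDerivAt_iff_tendsto_slope.1 hVd'
    have h2 : Tendsto (fun s => |slope V t s|) (𝓝[≠] t) (𝓝 |L|) :=
      (continuous_abs.tendsto L).comp h
    rw [abs_of_nonneg hLnn] at h2
    refine h2.congr fun s => ?_
    rw [slope_def_field, abs_div]
  have hIoo_ev : ∀ᶠ s in 𝓝[≠] t, s ∈ Ioo p q :=
    Filter.Eventually.filter_mono nhdsWithin_le_nhds (isOpen_Ioo.eventually_mem ht)
  have hne_ev : ∀ᶠ s in 𝓝[≠] t, s ≠ t := by
    filter_upwards [self_mem_nhdsWithin] with s hs using hs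
  have hVarEq : ∀ᶠ s in 𝓝[≠] t, eVariationOn γ (uIcc t s) = ENNReal.ofReal |V s - V t| := by
    filter_upwards [hIoo_ev] with s hs
    rcases le_total t s with h | h
    · rw [uIcc_of_le h, ← hVar t s ht.1.le h hs.2.le,
        abs_of_nonneg (hVnn t s h)]
    · rw [uIcc_of_ge h, ← hVar s t hs.1.le h ht.2.le, abs_sub_comm,
        abs_of_nonneg (hVnn s t h)]
  rcases eq_or_ne L 0 with hL0 | hL0
  · left
    have h0 : Tendsto (fun s => ENNReal.ofReal (|V s - V t| / |s - t|)) (𝓝[≠] t) (𝓝 0) := by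
      rw [hL0] at hslopeV
      have h1 := ENNReal.tendsto_ofReal hslopeV
      simpa using h1
    have htend : Tendsto (fun s => eVariationOn γ (Set.uIcc t s) / ENNReal.ofReal |s - t|)
        (𝓝[≠] t) (𝓝 0) := by
      refine Tendsto.congr' ?_ h0
      filter_upwards [hVarEq, hne_ev] with s hs hsne
      rw [hs, ← ENNReal.ofReal_div_of_pos (abs_pos.2 (sub_ne_zero.2 hsne))]
    exact htend.liminf_eq
  · right
    have hLpos : 0 < L := hLnn.lt_of_ne (Ne.symm hL0)
    have hup : ∀ᶠ s in 𝓝[≠] t, dist (γ s) (γ t) / |s - t| ≤ |V s - V t| / |s - t| := by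
      filter_upwards [hIoo_ev, hne_ev] with s hs hsne
      have hpos : 0 < |s - t| := abs_pos.2 (sub_ne_zero.2 hsne)
      refine (div_le_div_iff_of_pos_right hpos).2 ?_
      have := hdist2 s t (Ioo_subset_Icc_self hs) (Ioo_subset_Icc_self ht)
      rwa [abs_sub_comm] at this
    have hlow : ∀ ε : ℝ, 0 < ε → ∀ᶠ s in 𝓝[≠] t, L - ε < dist (γ s) (γ t) / |s - t| := by
      intro ε hε
      rcases lt_or_ge (L - ε) 0 with hneg | hnn
      · filter_upwards [hne_ev] with s hsne
        have hpos : 0 < |s - t| := abs_pos.2 (sub_ne_zero.2 hsne)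
        exact lt_of_lt_of_le hneg (by positivity)
      · have h1 : ENNReal.ofReal (L - ε) < m t := by
          refine lt_of_lt_of_le ?_ hGm
          rw [hGL]
          exact (ENNReal.ofReal_lt_ofReal_iff hLpos).2 (by linarith)
        rw [hm_def] at h1
        obtain ⟨n, hn⟩ := lt_iSup_iff.1 h1
        have hterm_ne : (pn n t - qn n t) ⊔ (qn n t - pn n t) ≠ ⊤ := by
          have hle : (pn n t - qn n t) ⊔ (qn n t - pn n t) ≤ pn n t ⊔ qn n t :=
            sup_le (le_trans tsub_le_self le_sup_left) (le_trans tsub_le_self le_sup_right)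
          rcases le_total (pn n t) (qn n t) with h | h
          · exact ne_top_of_le_ne_top (hfinQ' n) (hle.trans (sup_le h le_rfl))
          · exact ne_top_of_le_ne_top (hfinP' n) (hle.trans (sup_le le_rfl h))
        have habs : L - ε < |(pn n t).toReal - (qn n t).toReal| := by
          have h2 := ENNReal.toReal_strict_mono hterm_ne hn
          rwa [ENNReal.toReal_ofReal hnn, toReal_absdiff (hfinP' n) (hfinQ' n)] at h2
        have hder : HasDerivAt (f n) ((pn n t).toReal - (qn n t).toReal) t := by
          have h := (hPd' n).sub (hQd' n)
          have heq : (P n - Q n) = f n := funext (hPQdiff n)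
          rwa [heq] at h
        have hfslope : Tendsto (fun s => |f n s - f n t| / |s - t|) (𝓝[≠] t)
            (𝓝 |(pn n t).toReal - (qn n t).toReal|) := by
          have h := hasDerivAt_iff_tendsto_slope.1 hder
          have h2 := (continuous_abs.tendsto _).comp h
          refine h2.congr fun s => ?_
          rw [Function.comp_apply, slope_def_field, abs_div]
        filter_upwards [hfslope.eventually (eventually_gt_nhds habs), hIoo_ev, hne_ev]
          with s h1' h2' h3'
        refine lt_of_lt_of_le h1' ?_
        have hpos : 0 < |s - t| := abs_pos.2 (sub_ne_zero.2 h3')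
        refine (div_le_div_iff_of_pos_right hpos).2 ?_
        have hfs : f n s = dist (γ s) (x n) := by
          dsimp only [f]; rw [hc_id s (Ioo_subset_Icc_self h2')]
        have hft : f n t = dist (γ t) (x n) := by
          dsimp only [f]; rw [hc_id t (Ioo_subset_Icc_self ht)]
        rw [hfs, hft]
        exact abs_dist_sub_le _ _ _
    have hdtend : Tendsto (fun s => dist (γ s) (γ t) / |s - t|) (𝓝[≠] t) (𝓝 L) := by
      rw [Metric.tendsto_nhds]
      intro ε hε
      filter_upwards [hlow (ε / 2) (by linarith), hup,
        hslopeV.eventually (eventually_lt_nhds (show L < L + ε / 2 by linarith))]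
        with s hs1 hs2 hs3
      rw [Real.dist_eq, abs_sub_lt_iff]
      constructor
      · have := hs2.trans hs3.le
        linarith
      · linarith
    have hratio := hdtend.div hslopeV hL0
    rw [div_self hL0] at hratio
    refine Tendsto.congr' ?_ hratio
    filter_upwards [hVarEq, hne_ev] with s hs hsne
    rw [hs, ENNReal.toReal_ofReal (abs_nonneg _)]
    exact div_div_div_cancel_right₀ (abs_ne_zero.2 (sub_ne_zero.2 hsne)) _ _

  

end VarDich

open VarDich in
/-- For `γ ∈ BV_loc(I;X)` and Lebesgue-a.e. `t ∈ I`, either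
`liminf_{ε→0} Var(γ;[t∧(t+ε), t∨(t+ε)])/|ε| = 0`, or
`lim_{ε→0} d(γ(t+ε),γ(t)) / Var(γ;[t∧(t+ε), t∨(t+ε)]) = 1`
(limits over `s = t+ε ∈ I`, `s ≠ t`). -/
theorem variation_vs_distance_dichotomy {X : Type*} [MetricSpace X]
    (I : Set ℝ) (hI : I.OrdConnected) (γ : ℝ → X)
    (hγ : ∀ a ∈ I, ∀ b ∈ I, a ≤ b → eVariationOn γ (Set.Icc a b) < ⊤) :
    ∀ᵐ t ∂(volume.restrict I),
      (Filter.liminf (fun s => eVariationOn γ (Set.uIcc t s) / ENNReal.ofReal |s - t|)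
          (𝓝[I \ {t}] t) = 0) ∨
      Tendsto (fun s => dist (γ s) (γ t) / (eVariationOn γ (Set.uIcc t s)).toReal)
        (𝓝[I \ {t}] t) (𝓝 1) := by
  classical
  set Pr : ℝ → Prop := fun t =>
      (Filter.liminf (fun s => eVariationOn γ (Set.uIcc t s) / ENNReal.ofReal |s - t|)
          (𝓝[I \ {t}] t) = 0) ∨
      Tendsto (fun s => dist (γ s) (γ t) / (eVariationOn γ (Set.uIcc t s)).toReal)
        (𝓝[I \ {t}] t) (𝓝 1) with hPr
  have hmain : ∀ᵐ t, t ∈ I → Pr t := by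
    -- the rational pairs inside I
    set ι : Set (ℚ × ℚ) := {rr : ℚ × ℚ | ((rr.1 : ℝ)) ∈ I ∧ ((rr.2 : ℝ)) ∈ I ∧ ((rr.1 : ℝ)) < rr.2}
      with hι
    have hmainpair : ∀ rr : ℚ × ℚ, rr ∈ ι → ∀ᵐ t, t ∈ Ioo ((rr.1 : ℝ)) ((rr.2 : ℝ)) →
        (Filter.liminf (fun s => eVariationOn γ (Set.uIcc t s) / ENNReal.ofReal |s - t|)
            (𝓝[≠] t) = 0) ∨
        Tendsto (fun s => dist (γ s) (γ t) / (eVariationOn γ (Set.uIcc t s)).toReal)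
          (𝓝[≠] t) (𝓝 1) := by
      intro rr hrr
      exact main_local γ hrr.2.2 (hγ _ hrr.1 _ hrr.2.1 hrr.2.2.le).ne
    -- countable intersection of the pair statements
    have hAE : ∀ᵐ t, ∀ rr : ℚ × ℚ, rr ∈ ι → t ∈ Ioo ((rr.1 : ℝ)) ((rr.2 : ℝ)) →
        (Filter.liminf (fun s => eVariationOn γ (Set.uIcc t s) / ENNReal.ofReal |s - t|)
            (𝓝[≠] t) = 0) ∨
        Tendsto (fun s => dist (γ s) (γ t) / (eVariationOn γ (Set.uIcc t s)).toReal)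
          (𝓝[≠] t) (𝓝 1) := by
      rw [ae_all_iff]
      intro rr
      rcases Classical.em (rr ∈ ι) with h | h
      · filter_upwards [hmainpair rr h] with t ht
        exact fun _ => ht
      · filter_upwards [] with t
        exact fun h' => absurd h' h
    -- the two extreme (subsingleton) parts of I
    set U : Set ℝ := {t : ℝ | ∀ r : ℚ, ((r : ℝ)) ∈ I → ((r : ℝ)) ≤ t} with hU
    set W : Set ℝ := {t : ℝ | ∀ r : ℚ, ((r : ℝ)) ∈ I → t ≤ ((r : ℝ))} with hW
    have hIU : (I ∩ U).Subsingleton := by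
      intro a ha b hb
      by_contra hab
      rcases Ne.lt_or_gt hab with h | h
      · obtain ⟨r, hr1, hr2⟩ := exists_rat_btwn h
        have hrI : ((r : ℝ)) ∈ I := hI.out ha.1 hb.1 ⟨hr1.le, hr2.le⟩
        exact absurd (ha.2 r hrI) (not_le.2 hr1)
      · obtain ⟨r, hr1, hr2⟩ := exists_rat_btwn h
        have hrI : ((r : ℝ)) ∈ I := hI.out hb.1 ha.1 ⟨hr1.le, hr2.le⟩
        exact absurd (hb.2 r hrI) (not_le.2 hr1)
    have hIW : (I ∩ W).Subsingleton := by
      intro a ha b hb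
      by_contra hab
      rcases Ne.lt_or_gt hab with h | h
      · obtain ⟨r, hr1, hr2⟩ := exists_rat_btwn h
        have hrI : ((r : ℝ)) ∈ I := hI.out ha.1 hb.1 ⟨hr1.le, hr2.le⟩
        exact absurd (hb.2 r hrI) (not_le.2 hr2)
      · obtain ⟨r, hr1, hr2⟩ := exists_rat_btwn h
        have hrI : ((r : ℝ)) ∈ I := hI.out hb.1 ha.1 ⟨hr1.le, hr2.le⟩
        exact absurd (ha.2 r hrI) (not_le.2 hr2)
    have hUnull : volume (I ∩ U) = 0 := hIU.measure_zero _
    have hWnull : volume (I ∩ W) = 0 := hIW.measure_zero _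
    filter_upwards [hAE, (measure_eq_zero_iff_ae_notMem.1 hUnull), (measure_eq_zero_iff_ae_notMem.1 hWnull)]
      with t hAE' hnU hnW htI
    -- find a rational pair around t
    have hnotU : t ∉ U := fun h => hnU ⟨htI, h⟩
    have hnotW : t ∉ W := fun h => hnW ⟨htI, h⟩
    rw [hU, mem_setOf_eq] at hnotU
    rw [hW, mem_setOf_eq] at hnotW
    push_neg at hnotU hnotW
    obtain ⟨r2, hr2I, hr2gt⟩ := hnotU
    obtain ⟨r1, hr1I, hr1lt⟩ := hnotW
    have hpair : (r1, r2) ∈ ι := ⟨hr1I, hr2I, by exact_mod_cast hr1lt.trans hr2gt⟩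
    have htIoo : t ∈ Ioo ((r1 : ℝ)) ((r2 : ℝ)) := ⟨hr1lt, hr2gt⟩
    -- identify the filters
    have hIoosub : Ioo ((r1 : ℝ)) ((r2 : ℝ)) ⊆ I := fun z hz =>
      hI.out hr1I hr2I ⟨hz.1.le, hz.2.le⟩
    have hInhds : I ∈ 𝓝 t := mem_nhds_iff.2 ⟨Ioo _ _, hIoosub, isOpen_Ioo, htIoo⟩
    have hfeq : 𝓝[I \ {t}] t = 𝓝[≠] t := by
      rw [diff_eq, nhdsWithin_inter, nhdsWithin_eq_nhds.2 hInhds]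
      exact inf_eq_right.2 nhdsWithin_le_nhds
    rw [hPr]
    dsimp only
    rw [hfeq]
    exact hAE' (r1, r2) hpair htIoo
  have h1 : ∀ᵐ t ∂(volume.restrict I), t ∈ I → Pr t := ae_restrict_of_ae hmain
  have h2 : ∀ᵐ t ∂(volume.restrict I), t ∈ I := ae_restrict_mem hI.measurableSet
  filter_upwards [h1, h2] with t ht1 ht2
  exact ht1 ht2
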